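/- In the colored partition monoid CPar_k, for colored partition diagrams d and d', one has CPar_k · d = CPar_k · d' (Green's L-relation) if and only if: (1) the set of colored nonpropagating bottom blocks of d equals that of d', and (2) the set of bottom constituents (intersections with {1',...,k'}) of the propagating parts of d equals the set of bottom constituents of the propagating parts of d' (colors of propagating parts may differ). -/

import Mathlib

open Relation

/-- The cyclic group of order `r` (multiplicative). -/
abbrev Cr (r : ℕ) := Multiplicative (ZMod r)

/-- A colored `(k,l)`-partition diagram: a set-partition (equivalence relation)
of the `k` top vertices (`Sum.inl`) and `l` bottom vertices (`Sum.inr`),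
together with a color from `C_r` attached to each block. -/
structure CDiag (r k l : ℕ) where
  rel : Setoid (Fin k ⊕ Fin l)
  col : Quotient rel → Cr r

namespace CDiag

/-- Push a setoid forward along a map (equivalence relation generated by the
image relation). -/
def push {α β : Type*} (f : α → β) (s : Setoid α) : Setoid β :=
  Relation.EqvGen.setoid fun x y => ∃ a b, s.r a b ∧ x = f a ∧ y = f b

/-- Top row of the first factor stays on top; its bottom row goes to the middle. -/
def ι₁ {k l m : ℕ} : Fin k ⊕ Fin l → Fin k ⊕ (Fin l ⊕ Fin m) :=
  Sum.map id Sum.inl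

/-- Top row of the second factor goes to the middle; its bottom row stays at the
bottom. -/
def ι₂ {k l m : ℕ} : Fin l ⊕ Fin m → Fin k ⊕ (Fin l ⊕ Fin m) :=
  Sum.inr

/-- The outer (top and bottom) vertices inside the three-row concatenation. -/
def ιo {k l m : ℕ} : Fin k ⊕ Fin m → Fin k ⊕ (Fin l ⊕ Fin m) :=
  Sum.map id Sum.inr

/-- The equivalence relation on the three rows generated by stacking `d₁` on
top of `d₂`. -/
def bigRel {r k l m : ℕ} (d₁ : CDiag r k l) (d₂ : CDiag r l m) :
    Setoid (Fin k ⊕ (Fin l ⊕ Fin m)) :=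
  push (ι₁ (m := m)) d₁.rel ⊔ push (ι₂ (k := k)) d₂.rel

/-- Linear position of a vertex (top row first, then bottom row). -/
def pos {k l : ℕ} : Fin k ⊕ Fin l → ℕ :=
  Sum.elim (fun i => (i : ℕ)) fun j => k + (j : ℕ)

/-- `a` is the canonical (least-position) representative of its block in `d`. -/
def lead {r k l : ℕ} (d : CDiag r k l) (a : Fin k ⊕ Fin l) : Prop :=
  ∀ b, d.rel.r a b → pos a ≤ pos b

/-- Concatenation of colored partition diagrams (all parameters `x_i = 1`):
stack `d₁` on top of `d₂`, identify the bottom row of `d₁` with the top row of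
`d₂`, restrict to the outer rows, color each resulting block by the product of
the colors of all blocks of `d₁` and `d₂` contributing to it, and discard the
components lying entirely in the middle. -/
noncomputable def comp {r k l m : ℕ} (d₁ : CDiag r k l) (d₂ : CDiag r l m) :
    CDiag r k m where
  rel := Setoid.comap ιo (bigRel d₁ d₂)
  col := fun q =>
    (∏ᶠ (a : Fin k ⊕ Fin l)
      (_ : lead d₁ a ∧ (bigRel d₁ d₂).r (ι₁ a) (ιo q.out)),
        d₁.col (Quotient.mk d₁.rel a)) *
    (∏ᶠ (a : Fin l ⊕ Fin m)
      (_ : lead d₂ a ∧ (bigRel d₁ d₂).r (ι₂ a) (ιo q.out)),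
        d₂.col (Quotient.mk d₂.rel a))

/-- The identity diagram: each part `{i, i'}`, all colored by the identity. -/
def idDiag (r k : ℕ) : CDiag r k k :=
  ⟨Relation.EqvGen.setoid fun x y => ∃ i, x = Sum.inl i ∧ y = Sum.inr i,
    fun _ => 1⟩

/-- A block is propagating if it meets both the top and the bottom row. -/
def Propagating {r k l : ℕ} (d : CDiag r k l) (q : Quotient d.rel) : Prop :=
  (∃ i : Fin k, Quotient.mk d.rel (Sum.inl i) = q) ∧
  (∃ j : Fin l, Quotient.mk d.rel (Sum.inr j) = q)

/-- The rank of a colored partition diagram: its number of propagating parts. -/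
noncomputable def rn {r k l : ℕ} (d : CDiag r k l) : ℕ :=
  Nat.card {q : Quotient d.rel // Propagating d q}

end CDiag

open CDiag

/-- The colored nonpropagating bottom blocks of a colored `(k,k)`-partition
diagram: blocks contained in the bottom row, together with their colors. -/
def downBlocks {r k : ℕ} (d : CDiag r k k) : Set (Set (Fin k) × Cr r) :=
  { p | ∃ q : Quotient d.rel,
      (∀ i : Fin k, Quotient.mk d.rel (Sum.inl i) ≠ q) ∧
      (∃ j : Fin k, Quotient.mk d.rel (Sum.inr j) = q) ∧
      p.1 = {j : Fin k | Quotient.mk d.rel (Sum.inr j) = q} ∧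
      p.2 = d.col q }

/-- The bottom constituents (intersections with the bottom row) of the
propagating parts of a colored `(k,k)`-partition diagram. -/
def propBottoms {r k : ℕ} (d : CDiag r k k) : Set (Set (Fin k)) :=
  { s | ∃ q : Quotient d.rel, Propagating d q ∧
      s = {j : Fin k | Quotient.mk d.rel (Sum.inr j) = q} }

----------------------------------------------------------------
-- AUX
----------------------------------------------------------------
namespace CDiag

variable {r k l m : ℕ}

lemma pos_inj {k l : ℕ} : Function.Injective (pos (k := k) (l := l)) := by
  rintro (i | j) (i' | j') h <;>
    simp only [pos, Sum.elim_inl, Sum.elim_inr] at h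
  · exact congrArg Sum.inl (Fin.ext h)
  · exact absurd h (by have := i.isLt; omega)
  · exact absurd h (by have := i'.isLt; omega)
  · exact congrArg Sum.inr (Fin.ext (by omega))

lemma exists_lead (d : CDiag r k l) (z : Fin k ⊕ Fin l) :
    ∃ p, lead d p ∧ d.rel.r p z := by
  classical
  obtain ⟨p, hp, hmin⟩ := Finset.exists_min_image
    (Finset.univ.filter fun p => d.rel.r p z) pos ⟨z, by simp⟩
  simp only [Finset.mem_filter, Finset.mem_univ, true_and] at hp hmin
  exact ⟨p, fun b hb => hmin b (d.rel.trans' (d.rel.symm' hb) hp), hp⟩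

lemma lead_unique {d : CDiag r k l} {p q : Fin k ⊕ Fin l} (hp : lead d p) (hq : lead d q)
    (h : d.rel.r p q) : p = q :=
  pos_inj (le_antisymm (hp q h) (hq p (d.rel.symm' h)))

lemma push_rel_of {α β : Type*} (f : α → β) (s : Setoid α) {p q : α} (h : s.r p q) :
    (push f s).r (f p) (f q) := EqvGen.rel _ _ ⟨p, q, h, rfl, rfl⟩

lemma push_le {α β : Type*} {f : α → β} {s : Setoid α} {t : Setoid β}
    (h : ∀ p q, s.r p q → t.r (f p) (f q)) : push f s ≤ t :=
  Setoid.eqvGen_le (by rintro x y ⟨p, q, hpq, rfl, rfl⟩; exact h p q hpq)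

lemma bigRel_left (d₁ : CDiag r k l) (d₂ : CDiag r l m) {p q} (h : d₁.rel.r p q) :
    (bigRel d₁ d₂).r (ι₁ p) (ι₁ q) :=
  Setoid.le_def.mp le_sup_left (push_rel_of _ _ h)

lemma bigRel_right (d₁ : CDiag r k l) (d₂ : CDiag r l m) {p q} (h : d₂.rel.r p q) :
    (bigRel d₁ d₂).r (ι₂ p) (ι₂ q) :=
  Setoid.le_def.mp le_sup_right (push_rel_of _ _ h)

lemma bigRel_invariant {δ : Type*} (d₁ : CDiag r k l) (d₂ : CDiag r l m)
    (Φ : Fin k ⊕ (Fin l ⊕ Fin m) → δ)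
    (h₁ : ∀ p q, d₁.rel.r p q → Φ (ι₁ p) = Φ (ι₁ q))
    (h₂ : ∀ p q, d₂.rel.r p q → Φ (ι₂ p) = Φ (ι₂ q)) :
    ∀ p q, (bigRel d₁ d₂).r p q → Φ p = Φ q := by
  have H : bigRel d₁ d₂ ≤ Setoid.ker Φ :=
    sup_le (push_le fun p q h => h₁ p q h) (push_le fun p q h => h₂ p q h)
  exact fun p q h => Setoid.le_def.mp H h

lemma comp_rel (d₁ : CDiag r k l) (d₂ : CDiag r l m) {u v : Fin k ⊕ Fin m} :
    (comp d₁ d₂).rel.r u v ↔ (bigRel d₁ d₂).r (ιo u) (ιo v) := Iff.rfl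

end CDiag

namespace CDiag

section FinprodAux
variable {α M' : Type*} [CommMonoid M']

lemma finprod_cond_congr {P Q : α → Prop} (f : α → M')
    (h : ∀ p, P p ↔ Q p) : (∏ᶠ (p) (_ : P p), f p) = ∏ᶠ (p) (_ : Q p), f p := by
  have : P = Q := funext fun p => propext (h p)
  rw [this]

lemma finprod_cond_empty {P : α → Prop} (f : α → M') (h : ∀ p, ¬ P p) :
    (∏ᶠ (p) (_ : P p), f p) = 1 := by
  classical
  rw [finprod_cond_eq_prod_of_cond_iff (t := (∅ : Finset α)) f
    (fun {x} => by simp [h x])]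
  simp

lemma finprod_cond_singleton {P : α → Prop} (f : α → M') {p₀ : α}
    (h : ∀ p, P p ↔ p = p₀) : (∏ᶠ (p) (_ : P p), f p) = f p₀ := by
  classical
  rw [finprod_cond_eq_prod_of_cond_iff (t := ({p₀} : Finset α)) f
    (fun {x} => by simp [h x])]
  simp
end FinprodAux

variable {r k l m : ℕ}

lemma ext_col {d₁ d₂ : CDiag r k l} (h : d₁.rel = d₂.rel)
    (h2 : ∀ w, d₁.col (Quotient.mk d₁.rel w) = d₂.col (Quotient.mk d₂.rel w)) : d₁ = d₂ := by
  obtain ⟨r₁, c₁⟩ := d₁; obtain ⟨r₂, c₂⟩ := d₂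
  dsimp at h h2; subst h
  simp only [CDiag.mk.injEq, heq_eq_eq, true_and]
  funext q
  induction q using Quotient.ind
  exact h2 _

lemma col_comp (d₁ : CDiag r k l) (d₂ : CDiag r l m) (w : Fin k ⊕ Fin m) :
    (comp d₁ d₂).col (Quotient.mk (comp d₁ d₂).rel w) =
      (∏ᶠ (p) (_ : lead d₁ p ∧ (bigRel d₁ d₂).r (ι₁ p) (ιo w)),
        d₁.col (Quotient.mk d₁.rel p)) *
      (∏ᶠ (p) (_ : lead d₂ p ∧ (bigRel d₁ d₂).r (ι₂ p) (ιo w)),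
        d₂.col (Quotient.mk d₂.rel p)) := by
  have hout : (bigRel d₁ d₂).r (ιo (Quotient.mk (comp d₁ d₂).rel w).out) (ιo w) :=
    (comp_rel _ _).mp (Quotient.mk_out (s := (comp d₁ d₂).rel) w)
  have e1 : (comp d₁ d₂).col (Quotient.mk (comp d₁ d₂).rel w) =
      (∏ᶠ (p) (_ : lead d₁ p ∧
          (bigRel d₁ d₂).r (ι₁ p) (ιo (Quotient.mk (comp d₁ d₂).rel w).out)),
        d₁.col (Quotient.mk d₁.rel p)) *
      (∏ᶠ (p) (_ : lead d₂ p ∧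
          (bigRel d₁ d₂).r (ι₂ p) (ιo (Quotient.mk (comp d₁ d₂).rel w).out)),
        d₂.col (Quotient.mk d₂.rel p)) := rfl
  rw [e1]
  congr 1
  · exact finprod_cond_congr _ fun p => and_congr_right fun _ =>
      ⟨fun h => (bigRel d₁ d₂).trans' h hout, fun h => (bigRel d₁ d₂).trans' h ((bigRel d₁ d₂).symm' hout)⟩
  · exact finprod_cond_congr _ fun p => and_congr_right fun _ =>
      ⟨fun h => (bigRel d₁ d₂).trans' h hout, fun h => (bigRel d₁ d₂).trans' h ((bigRel d₁ d₂).symm' hout)⟩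

lemma bigRel_nonprop (d₁ : CDiag r k l) (d₂ : CDiag r l m) (j : Fin m)
    (hK : ∀ i : Fin l, ¬ d₂.rel.r (Sum.inl i) (Sum.inr j)) (z) :
    (bigRel d₁ d₂).r z (ι₂ (Sum.inr j)) ↔ ∃ p, d₂.rel.r p (Sum.inr j) ∧ z = ι₂ p := by
  constructor
  · intro h
    have key := bigRel_invariant d₁ d₂
      (fun z => ∃ p, d₂.rel.r p (Sum.inr j) ∧ z = ι₂ p) ?_ ?_ z _ h
    · rw [show (∃ p, d₂.rel.r p (Sum.inr j) ∧ z = ι₂ p) = _ from key]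
      exact ⟨Sum.inr j, d₂.rel.refl' _, rfl⟩
    · intro p q _
      have h1 : ∀ p : Fin k ⊕ Fin l, ¬ ∃ p', d₂.rel.r p' (Sum.inr j) ∧ ι₁ p = ι₂ p' := by
        rintro (i | lm) ⟨p', hp', he⟩
        · exact absurd he (by simp [ι₁, ι₂])
        · have : p' = Sum.inl lm := by
            simpa [ι₁, ι₂, eq_comm] using he
          exact hK lm (this ▸ hp')
      exact propext ⟨fun hh => absurd hh (h1 p), fun hh => absurd hh (h1 q)⟩
    · intro p q hpq
      refine propext ⟨?_, ?_⟩
      · rintro ⟨p', hp', he⟩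
        have : p = p' := Sum.inr_injective he
        exact ⟨q, d₂.rel.trans' (d₂.rel.symm' hpq) (this ▸ hp'), rfl⟩
      · rintro ⟨p', hp', he⟩
        have : q = p' := Sum.inr_injective he
        exact ⟨p, d₂.rel.trans' hpq (this ▸ hp'), rfl⟩
  · rintro ⟨p, hp, rfl⟩
    exact bigRel_right d₁ d₂ hp

end CDiag

namespace CDiag
variable {r k l m : ℕ}

@[simp] lemma ι₁_inl (i : Fin k) : (ι₁ (l := l) (m := m) (Sum.inl i)) = Sum.inl i := rfl
@[simp] lemma ι₁_inr (a : Fin l) : (ι₁ (k := k) (m := m) (Sum.inr a)) = Sum.inr (Sum.inl a) := rfl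
@[simp] lemma ι₂_inl (a : Fin l) : (ι₂ (k := k) (m := m) (Sum.inl a)) = Sum.inr (Sum.inl a) := rfl
@[simp] lemma ι₂_inr (j : Fin m) : (ι₂ (k := k) (l := l) (Sum.inr j)) = Sum.inr (Sum.inr j) := rfl
@[simp] lemma ιo_inl (i : Fin k) : (ιo (l := l) (m := m) (Sum.inl i)) = Sum.inl i := rfl
@[simp] lemma ιo_inr (j : Fin m) : (ιo (k := k) (l := l) (Sum.inr j)) = Sum.inr (Sum.inr j) := rfl

lemma comp_nonprop_top (d₁ : CDiag r k l) (d₂ : CDiag r l m) (j : Fin m)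
    (hK : ∀ i : Fin l, ¬ d₂.rel.r (Sum.inl i) (Sum.inr j)) (i : Fin k) :
    ¬ (comp d₁ d₂).rel.r (Sum.inl i) (Sum.inr j) := by
  intro h
  rw [comp_rel] at h
  obtain ⟨p, hp, he⟩ := (bigRel_nonprop d₁ d₂ j hK _).mp h
  rw [ιo_inl] at he
  exact absurd he (by simp [ι₂])

lemma comp_nonprop_bot (d₁ : CDiag r k l) (d₂ : CDiag r l m) (j : Fin m)
    (hK : ∀ i : Fin l, ¬ d₂.rel.r (Sum.inl i) (Sum.inr j)) (j' : Fin m) :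
    (comp d₁ d₂).rel.r (Sum.inr j') (Sum.inr j) ↔ d₂.rel.r (Sum.inr j') (Sum.inr j) := by
  rw [comp_rel]
  constructor
  · intro h
    obtain ⟨p, hp, he⟩ := (bigRel_nonprop d₁ d₂ j hK _).mp h
    rw [ιo_inr] at he
    have : p = Sum.inr j' := by
      rcases p with a | b
      · exact absurd he (by simp [ι₂])
      · simp only [ι₂_inr, Sum.inr.injEq] at he
        exact congrArg Sum.inr he.symm
    exact this ▸ hp
  · intro h
    exact bigRel_right d₁ d₂ h

lemma comp_nonprop_col (d₁ : CDiag r k l) (d₂ : CDiag r l m) (j : Fin m)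
    (hK : ∀ i : Fin l, ¬ d₂.rel.r (Sum.inl i) (Sum.inr j)) :
    (comp d₁ d₂).col (Quotient.mk (comp d₁ d₂).rel (Sum.inr j)) =
      d₂.col (Quotient.mk d₂.rel (Sum.inr j)) := by
  rw [col_comp]
  obtain ⟨p₀, hp₀l, hp₀r⟩ := exists_lead d₂ (Sum.inr j)
  have e1 : (∏ᶠ (p) (_ : lead d₁ p ∧ (bigRel d₁ d₂).r (ι₁ p) (ιo (Sum.inr j))),
      d₁.col (Quotient.mk d₁.rel p)) = 1 := by
    refine finprod_cond_empty _ fun p ⟨_, h⟩ => ?_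
    rw [ιo_inr, show (Sum.inr (Sum.inr j) : Fin k ⊕ (Fin l ⊕ Fin m)) = ι₂ (Sum.inr j) from rfl]
      at h
    obtain ⟨p', hp', he⟩ := (bigRel_nonprop d₁ d₂ j hK _).mp h
    rcases p with a | b
    · exact absurd he (by simp [ι₂])
    · have : p' = Sum.inl b := by simpa [ι₂, eq_comm] using he
      exact hK b (this ▸ hp')
  have e2 : (∏ᶠ (p) (_ : lead d₂ p ∧ (bigRel d₁ d₂).r (ι₂ p) (ιo (Sum.inr j))),
      d₂.col (Quotient.mk d₂.rel p)) = d₂.col (Quotient.mk d₂.rel p₀) := by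
    refine finprod_cond_singleton _ fun p => ?_
    constructor
    · rintro ⟨hl, h⟩
      rw [ιo_inr, show (Sum.inr (Sum.inr j) : Fin k ⊕ (Fin l ⊕ Fin m)) = ι₂ (Sum.inr j) from rfl]
        at h
      obtain ⟨p', hp', he⟩ := (bigRel_nonprop d₁ d₂ j hK _).mp h
      have hpp' : p = p' := by simpa [ι₂] using he
      exact lead_unique hl hp₀l (d₂.rel.trans' (hpp' ▸ hp') (d₂.rel.symm' hp₀r))
    · rintro rfl
      refine ⟨hp₀l, (bigRel_nonprop d₁ d₂ j hK _).mpr ⟨p, hp₀r, rfl⟩⟩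
  rw [e1, e2, one_mul]
  exact congrArg _ (Quotient.sound hp₀r)

end CDiag

section LForward
variable {r k : ℕ}
open CDiag

/-- The abstract "divisibility" predicate depending only on bottom data. -/
def QL (x : CDiag r k k) (DB : Set (Set (Fin k) × Cr r)) (PB : Set (Set (Fin k))) : Prop :=
  DB ⊆ downBlocks x ∧
  (∀ S ∈ propBottoms x, ∀ j ∈ S, ∃ T ∈ PB, j ∈ T ∧ T ⊆ S) ∧
  (∀ p ∈ downBlocks x, p ∈ DB ∨ ∀ j ∈ p.1, ∃ T ∈ PB, j ∈ T ∧ T ⊆ p.1)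

lemma T_sub (a d : CDiag r k k) {j : Fin k} {jm : Fin k}
    (hjm : d.rel.r (Sum.inl jm) (Sum.inr j)) :
    ∃ T ∈ propBottoms d, j ∈ T ∧
      T ⊆ {j₂ : Fin k | Quotient.mk (comp a d).rel (Sum.inr j₂) =
            Quotient.mk (comp a d).rel (Sum.inr j)} := by
  refine ⟨{j₂ : Fin k | Quotient.mk d.rel (Sum.inr j₂) = Quotient.mk d.rel (Sum.inl jm)},
    ⟨Quotient.mk d.rel (Sum.inl jm), ⟨⟨jm, rfl⟩, ⟨j, Quotient.sound (d.rel.symm' hjm)⟩⟩, rfl⟩,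
    Quotient.sound (d.rel.symm' hjm), ?_⟩
  intro j₂ hj₂
  have h2 : d.rel.r (Sum.inr j₂) (Sum.inr j) :=
    d.rel.trans' (Quotient.exact hj₂) hjm
  exact Quotient.sound (bigRel_right a d h2)

lemma L_forward (a d : CDiag r k k) :
    QL (comp a d) (downBlocks d) (propBottoms d) := by
  set x := comp a d with hx
  refine ⟨?_, ?_, ?_⟩
  · -- downBlocks d ⊆ downBlocks x
    rintro ⟨S, c⟩ ⟨qd, hqtop, ⟨j₀, hj₀⟩, hS, hc⟩
    have hK : ∀ i : Fin k, ¬ d.rel.r (Sum.inl i) (Sum.inr j₀) := fun i h =>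
      hqtop i (hj₀ ▸ Quotient.sound h)
    refine ⟨Quotient.mk x.rel (Sum.inr j₀), ?_, ⟨j₀, rfl⟩, ?_, ?_⟩
    · intro i h
      exact comp_nonprop_top a d j₀ hK i (Quotient.exact h)
    · rw [hS]
      ext j
      simp only [Set.mem_setOf_eq]
      rw [← hj₀, Quotient.eq, Quotient.eq]
      exact (comp_nonprop_bot a d j₀ hK j).symm
    · rw [hc, ← hj₀]
      exact (comp_nonprop_col a d j₀ hK).symm
  · -- propagating bottoms covered
    rintro S ⟨q, ⟨⟨i, hi⟩, _⟩, rfl⟩ j hjS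
    simp only [Set.mem_setOf_eq] at hjS
    by_contra hcon
    push_neg at hcon
    have hK : ∀ i' : Fin k, ¬ d.rel.r (Sum.inl i') (Sum.inr j) := by
      intro jm hjm
      obtain ⟨T, hT1, hT2, hT3⟩ := T_sub a d hjm
      refine hcon T hT1 hT2 ?_
      intro j₂ hj₂
      have := hT3 hj₂
      simp only [Set.mem_setOf_eq] at this ⊢
      rw [this, hjS]
    have : x.rel.r (Sum.inl i) (Sum.inr j) := Quotient.exact (hi.trans hjS.symm)
    exact comp_nonprop_top a d j hK i this
  · -- downBlocks x decomposition
    rintro ⟨S, c⟩ ⟨q, hqtop, ⟨j₀, hj₀⟩, hS, hc⟩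
    by_cases hex : ∃ j', Quotient.mk x.rel (Sum.inr j') = q ∧
        ∀ i : Fin k, ¬ d.rel.r (Sum.inl i) (Sum.inr j')
    · left
      obtain ⟨j', hj', hK⟩ := hex
      refine ⟨Quotient.mk d.rel (Sum.inr j'), ?_, ⟨j', rfl⟩, ?_, ?_⟩
      · intro i h
        exact hK i (Quotient.exact h)
      · rw [hS]
        ext j
        simp only [Set.mem_setOf_eq]
        rw [← hj', Quotient.eq, Quotient.eq]
        exact comp_nonprop_bot a d j' hK j
      · rw [hc, ← hj']
        exact comp_nonprop_col a d j' hK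
    · right
      push_neg at hex
      intro j hjS
      rw [hS] at hjS
      simp only [Set.mem_setOf_eq] at hjS
      obtain ⟨jm, hjm⟩ := hex j hjS
      obtain ⟨T, hT1, hT2, hT3⟩ := T_sub a d hjm
      refine ⟨T, hT1, hT2, ?_⟩
      intro j₂ hj₂
      have := hT3 hj₂
      simp only [Set.mem_setOf_eq] at this
      rw [hS]
      simp only [Set.mem_setOf_eq]
      rw [this, hjS]

end LForward

namespace CDiag
section Construction
variable {r k : ℕ}

open scoped Classical

/-- The block of `Sum.inl j` in `d` meets the bottom row. -/
def PropTop (d : CDiag r k k) (j : Fin k) : Prop := ∃ j', d.rel.r (Sum.inl j) (Sum.inr j')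

/-- The block of `j'` in the bottom row of `x`. -/
def xblock (x : CDiag r k k) (j : Fin k) : Set (Fin k) :=
  {j₂ : Fin k | Quotient.mk x.rel (Sum.inr j₂) = Quotient.mk x.rel (Sum.inr j)}

variable (d x : CDiag r k k)

noncomputable def ψaux : Fin k ⊕ Fin k → (Fin k ⊕ Fin k) ⊕ Fin k
  | Sum.inl i => Sum.inl (Sum.inl i)
  | Sum.inr j => if h : PropTop d j then Sum.inl (Sum.inr (Classical.choose h)) else Sum.inr j

def extRel : Setoid ((Fin k ⊕ Fin k) ⊕ Fin k) where
  r := fun u v => (∃ u' v', x.rel.r u' v' ∧ u = Sum.inl u' ∧ v = Sum.inl v') ∨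
      (∃ j, u = Sum.inr j ∧ v = Sum.inr j)
  iseqv := by
    constructor
    · rintro (u' | j)
      · exact Or.inl ⟨u', u', x.rel.refl' _, rfl, rfl⟩
      · exact Or.inr ⟨j, rfl, rfl⟩
    · rintro u v (⟨u', v', h, rfl, rfl⟩ | ⟨j, rfl, rfl⟩)
      · exact Or.inl ⟨v', u', x.rel.symm' h, rfl, rfl⟩
      · exact Or.inr ⟨j, rfl, rfl⟩
    · rintro u v w (⟨u', v', h, rfl, rfl⟩ | ⟨j, rfl, rfl⟩) (⟨v'', w', h2, he, rfl⟩ | ⟨j2, he, rfl⟩)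
      · obtain rfl : v' = v'' := Sum.inl_injective he
        exact Or.inl ⟨u', w', x.rel.trans' h h2, rfl, rfl⟩
      · exact absurd he (by simp)
      · exact absurd he (by simp)
      · obtain rfl : j = j2 := Sum.inr_injective he
        exact Or.inr ⟨j, rfl, rfl⟩

noncomputable def arel : Setoid (Fin k ⊕ Fin k) := Setoid.comap (ψaux d) (extRel x)

noncomputable def Mrel : Setoid (Fin k ⊕ (Fin k ⊕ Fin k)) :=
  push (ι₁ (m := k)) (arel d x) ⊔ push (ι₂ (k := k)) d.rel

noncomputable def Fcol (v : Fin k ⊕ Fin k) : Cr r :=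
  if h : ∃ u, ψaux d v = Sum.inl u then
    x.col (Quotient.mk x.rel (Classical.choose h)) *
      (∏ᶠ (p) (_ : lead d p ∧ (Mrel d x).r (ι₂ p) (ι₁ v)),
        d.col (Quotient.mk d.rel p))⁻¹
  else 1

noncomputable def theA : CDiag r k k where
  rel := arel d x
  col := fun Q => Fcol d x Q.out

lemma Mrel_eq : bigRel (theA d x) d = Mrel d x := rfl

noncomputable def Phi : Fin k ⊕ (Fin k ⊕ Fin k) → Quotient x.rel ⊕ Quotient d.rel
  | Sum.inl i => Sum.inl (Quotient.mk x.rel (Sum.inl i))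
  | Sum.inr (Sum.inl j) =>
      if h : PropTop d j then Sum.inl (Quotient.mk x.rel (Sum.inr (Classical.choose h)))
      else Sum.inr (Quotient.mk d.rel (Sum.inl j))
  | Sum.inr (Sum.inr j) => Sum.inl (Quotient.mk x.rel (Sum.inr j))

variable {d x}

section WithQ

/-- dichotomy for a bottom vertex. -/
lemma dichotomy (hQ : QL x (downBlocks d) (propBottoms d)) (j : Fin k) :
    (∃ T ∈ propBottoms d, j ∈ T ∧ T ⊆ xblock x j) ∨
      ((xblock x j, x.col (Quotient.mk x.rel (Sum.inr j))) ∈ downBlocks d) := by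
  by_cases hp : ∃ i, Quotient.mk x.rel (Sum.inl i) = Quotient.mk x.rel (Sum.inr j)
  · left
    exact hQ.2.1 (xblock x j) ⟨Quotient.mk x.rel (Sum.inr j), ⟨hp, ⟨j, rfl⟩⟩, rfl⟩ j rfl
  · have hdb : (xblock x j, x.col (Quotient.mk x.rel (Sum.inr j))) ∈ downBlocks x :=
      ⟨Quotient.mk x.rel (Sum.inr j), fun i h => hp ⟨i, h⟩, ⟨j, rfl⟩, rfl, rfl⟩
    rcases hQ.2.2 _ hdb with h | h
    · right; exact h
    · left; exact h j rfl

/-- bottom coherence: `d`-related bottom vertices are `x`-related. -/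
lemma bottomCoherent (hQ : QL x (downBlocks d) (propBottoms d)) {j j' : Fin k} (h : d.rel.r (Sum.inr j) (Sum.inr j')) :
    x.rel.r (Sum.inr j) (Sum.inr j') := by
  rcases dichotomy hQ j with ⟨T, ⟨qd, _, rfl⟩, hjT, hTsub⟩ | ⟨qd, _, _, hS, _⟩
  · simp only [Set.mem_setOf_eq] at hjT
    have hj' : j' ∈ {j₂ : Fin k | Quotient.mk d.rel (Sum.inr j₂) = qd} := by
      simp only [Set.mem_setOf_eq]
      rw [← hjT]
      exact Quotient.sound (d.rel.symm' h)
    have := hTsub hj'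
    simp only [xblock, Set.mem_setOf_eq] at this
    exact x.rel.symm' (Quotient.exact this)
  · simp only [] at hS
    have hj : j ∈ xblock x j := rfl
    rw [hS] at hj
    simp only [Set.mem_setOf_eq] at hj
    have hj' : j' ∈ xblock x j := by
      rw [hS]
      simp only [Set.mem_setOf_eq]
      rw [← hj]
      exact Quotient.sound (d.rel.symm' h)
    simp only [xblock, Set.mem_setOf_eq] at hj'
    exact x.rel.symm' (Quotient.exact hj')

lemma choose_coherent (hQ : QL x (downBlocks d) (propBottoms d)) {jm : Fin k} (h : PropTop d jm) {j : Fin k}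
    (hj : d.rel.r (Sum.inl jm) (Sum.inr j)) :
    x.rel.r (Sum.inr (Classical.choose h)) (Sum.inr j) :=
  bottomCoherent hQ (d.rel.trans' (d.rel.symm' (Classical.choose_spec h)) hj)

end WithQ
end Construction
end CDiag

namespace CDiag
section Construction2
variable {r k : ℕ} {d x : CDiag r k k}
open scoped Classical

lemma ψaux_inl (i : Fin k) : ψaux d (Sum.inl i) = Sum.inl (Sum.inl i) := rfl
lemma ψaux_inr_pos {j : Fin k} (h : PropTop d j) :
    ψaux d (Sum.inr j) = Sum.inl (Sum.inr (Classical.choose h)) := dif_pos h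
lemma ψaux_inr_neg {j : Fin k} (h : ¬ PropTop d j) :
    ψaux d (Sum.inr j) = Sum.inr j := dif_neg h

lemma Phi_inl (i : Fin k) :
    Phi d x (Sum.inl i) = Sum.inl (Quotient.mk x.rel (Sum.inl i)) := rfl
lemma Phi_mid_pos {j : Fin k} (h : PropTop d j) :
    Phi d x (Sum.inr (Sum.inl j)) =
      Sum.inl (Quotient.mk x.rel (Sum.inr (Classical.choose h))) := dif_pos h
lemma Phi_mid_neg {j : Fin k} (h : ¬ PropTop d j) :
    Phi d x (Sum.inr (Sum.inl j)) = Sum.inr (Quotient.mk d.rel (Sum.inl j)) := dif_neg h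
lemma Phi_bot (j : Fin k) :
    Phi d x (Sum.inr (Sum.inr j)) = Sum.inl (Quotient.mk x.rel (Sum.inr j)) := rfl
lemma Phi_outer (u : Fin k ⊕ Fin k) :
    Phi d x (ιo u) = Sum.inl (Quotient.mk x.rel u) := by cases u <;> rfl

lemma arel_r {p q : Fin k ⊕ Fin k} :
    (arel d x).r p q ↔ (extRel x).r (ψaux d p) (ψaux d q) := Iff.rfl

lemma arel_of_top {i i' : Fin k} (hx : x.rel.r (Sum.inl i) (Sum.inl i')) :
    (arel d x).r (Sum.inl i) (Sum.inl i') :=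
  Or.inl ⟨Sum.inl i, Sum.inl i', hx, rfl, rfl⟩

lemma arel_of_topmid {i j : Fin k} (h : PropTop d j)
    (hx : x.rel.r (Sum.inl i) (Sum.inr (Classical.choose h))) :
    (arel d x).r (Sum.inl i) (Sum.inr j) := by
  rw [arel_r, ψaux_inl, ψaux_inr_pos h]
  exact Or.inl ⟨_, _, hx, rfl, rfl⟩

lemma arel_of_midmid {j j' : Fin k} (h : PropTop d j) (h' : PropTop d j')
    (hx : x.rel.r (Sum.inr (Classical.choose h)) (Sum.inr (Classical.choose h'))) :
    (arel d x).r (Sum.inr j) (Sum.inr j') := by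
  rw [arel_r, ψaux_inr_pos h, ψaux_inr_pos h']
  exact Or.inl ⟨_, _, hx, rfl, rfl⟩

lemma phi_invariant (hQ : QL x (downBlocks d) (propBottoms d)) :
    ∀ z z', (Mrel d x).r z z' → Phi d x z = Phi d x z' := by
  refine bigRel_invariant (theA d x) d (Phi d x) ?_ ?_
  · -- the a-side
    intro p q hpq
    rw [show (theA d x).rel = arel d x from rfl, arel_r] at hpq
    rcases p with i | j <;> rcases q with i' | j'
    · rw [ψaux_inl, ψaux_inl] at hpq
      rcases hpq with ⟨u', v', hx, he1, he2⟩ | ⟨j0, he1, _⟩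
      · injection he1 with he1; injection he2 with he2; subst he1; subst he2
        exact congrArg Sum.inl (Quotient.sound hx)
      · exact absurd he1 (by simp)
    · rw [ψaux_inl] at hpq
      by_cases h : PropTop d j'
      · rw [ψaux_inr_pos h] at hpq
        rcases hpq with ⟨u', v', hx, he1, he2⟩ | ⟨j0, he1, _⟩
        · injection he1 with he1; injection he2 with he2; subst he1; subst he2
          rw [show ι₁ (Sum.inl i) = (Sum.inl i : Fin k ⊕ (Fin k ⊕ Fin k)) from rfl,
            show ι₁ (Sum.inr j') = (Sum.inr (Sum.inl j') : Fin k ⊕ (Fin k ⊕ Fin k)) from rfl,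
            Phi_inl, Phi_mid_pos h]
          exact congrArg Sum.inl (Quotient.sound hx)
        · exact absurd he1 (by simp)
      · rw [ψaux_inr_neg h] at hpq
        rcases hpq with ⟨u', v', hx, he1, he2⟩ | ⟨j0, he1, he2⟩
        · exact absurd he2 (by simp)
        · exact absurd he1 (by simp)
    · rw [ψaux_inl] at hpq
      by_cases h : PropTop d j
      · rw [ψaux_inr_pos h] at hpq
        rcases hpq with ⟨u', v', hx, he1, he2⟩ | ⟨j0, he1, _⟩
        · injection he1 with he1; injection he2 with he2; subst he1; subst he2
          rw [show ι₁ (Sum.inl i') = (Sum.inl i' : Fin k ⊕ (Fin k ⊕ Fin k)) from rfl,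
            show ι₁ (Sum.inr j) = (Sum.inr (Sum.inl j) : Fin k ⊕ (Fin k ⊕ Fin k)) from rfl,
            Phi_inl, Phi_mid_pos h]
          exact congrArg Sum.inl (Quotient.sound hx)
        · exact absurd he1 (by simp)
      · rw [ψaux_inr_neg h] at hpq
        rcases hpq with ⟨u', v', hx, he1, he2⟩ | ⟨j0, he1, he2⟩
        · exact absurd he1 (by simp)
        · exact absurd he2 (by simp)
    · by_cases h : PropTop d j <;> by_cases h' : PropTop d j'
      · rw [ψaux_inr_pos h, ψaux_inr_pos h'] at hpq
        rcases hpq with ⟨u', v', hx, he1, he2⟩ | ⟨j0, he1, _⟩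
        · injection he1 with he1; injection he2 with he2; subst he1; subst he2
          rw [show ι₁ (Sum.inr j) = (Sum.inr (Sum.inl j) : Fin k ⊕ (Fin k ⊕ Fin k)) from rfl,
            show ι₁ (Sum.inr j') = (Sum.inr (Sum.inl j') : Fin k ⊕ (Fin k ⊕ Fin k)) from rfl,
            Phi_mid_pos h, Phi_mid_pos h']
          exact congrArg Sum.inl (Quotient.sound hx)
        · exact absurd he1 (by simp)
      · rw [ψaux_inr_pos h, ψaux_inr_neg h'] at hpq
        rcases hpq with ⟨u', v', hx, he1, he2⟩ | ⟨j0, he1, he2⟩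
        · exact absurd he2 (by simp)
        · exact absurd he1 (by simp)
      · rw [ψaux_inr_neg h, ψaux_inr_pos h'] at hpq
        rcases hpq with ⟨u', v', hx, he1, he2⟩ | ⟨j0, he1, he2⟩
        · exact absurd he1 (by simp)
        · exact absurd he2 (by simp)
      · rw [ψaux_inr_neg h, ψaux_inr_neg h'] at hpq
        rcases hpq with ⟨u', v', hx, he1, he2⟩ | ⟨j0, he1, he2⟩
        · exact absurd he1 (by simp)
        · injection he1 with he1; injection he2 with he2; subst he1; subst he2
          rfl
  · -- the d-side
    intro p q hpq
    rcases p with j | j <;> rcases q with j' | j'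
    · rw [show ι₂ (Sum.inl j) = (Sum.inr (Sum.inl j) : Fin k ⊕ (Fin k ⊕ Fin k)) from rfl,
        show ι₂ (Sum.inl j') = (Sum.inr (Sum.inl j') : Fin k ⊕ (Fin k ⊕ Fin k)) from rfl]
      by_cases h : PropTop d j
      · have h' : PropTop d j' := by
          obtain ⟨j2, hj2⟩ := h
          exact ⟨j2, d.rel.trans' (d.rel.symm' hpq) hj2⟩
        rw [Phi_mid_pos h, Phi_mid_pos h']
        refine congrArg Sum.inl (Quotient.sound ?_)
        exact bottomCoherent hQ (d.rel.trans'
          (d.rel.symm' (Classical.choose_spec h))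
          (d.rel.trans' hpq (Classical.choose_spec h')))
      · have h' : ¬ PropTop d j' := by
          intro ⟨j2, hj2⟩
          exact h ⟨j2, d.rel.trans' hpq hj2⟩
        rw [Phi_mid_neg h, Phi_mid_neg h']
        exact congrArg Sum.inr (Quotient.sound hpq)
    · have h : PropTop d j := ⟨j', hpq⟩
      rw [show ι₂ (Sum.inl j) = (Sum.inr (Sum.inl j) : Fin k ⊕ (Fin k ⊕ Fin k)) from rfl,
        show ι₂ (Sum.inr j') = (Sum.inr (Sum.inr j') : Fin k ⊕ (Fin k ⊕ Fin k)) from rfl,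
        Phi_mid_pos h, Phi_bot]
      exact congrArg Sum.inl (Quotient.sound (choose_coherent hQ h hpq))
    · have h : PropTop d j' := ⟨j, d.rel.symm' hpq⟩
      rw [show ι₂ (Sum.inr j) = (Sum.inr (Sum.inr j) : Fin k ⊕ (Fin k ⊕ Fin k)) from rfl,
        show ι₂ (Sum.inl j') = (Sum.inr (Sum.inl j') : Fin k ⊕ (Fin k ⊕ Fin k)) from rfl,
        Phi_bot, Phi_mid_pos h]
      exact congrArg Sum.inl (Quotient.sound
        (x.rel.symm' (choose_coherent hQ h (d.rel.symm' hpq))))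
    · rw [show ι₂ (Sum.inr j) = (Sum.inr (Sum.inr j) : Fin k ⊕ (Fin k ⊕ Fin k)) from rfl,
        show ι₂ (Sum.inr j') = (Sum.inr (Sum.inr j') : Fin k ⊕ (Fin k ⊕ Fin k)) from rfl,
        Phi_bot, Phi_bot]
      exact congrArg Sum.inl (Quotient.sound (bottomCoherent hQ hpq))

end Construction2
end CDiag

namespace CDiag
section Construction3
variable {r k : ℕ} {d x : CDiag r k k}
open scoped Classical

lemma reach_mid {j jm : Fin k} (hjm : d.rel.r (Sum.inl jm) (Sum.inr j)) :
    (Mrel d x).r (ιo (Sum.inr j)) (ι₁ (Sum.inr jm)) :=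
  bigRel_right (theA d x) d (d.rel.symm' hjm)

lemma anchor_of_T {T : Set (Fin k)} {j : Fin k} (hT : T ∈ propBottoms d) (hj : j ∈ T) :
    ∃ jm, d.rel.r (Sum.inl jm) (Sum.inr j) := by
  obtain ⟨qd, ⟨⟨jm, hjm⟩, _⟩, rfl⟩ := hT
  simp only [Set.mem_setOf_eq] at hj
  exact ⟨jm, Quotient.exact (hjm.trans hj.symm)⟩

lemma anchor_of_prop (hQ : QL x (downBlocks d) (propBottoms d)) {i j : Fin k}
    (h : x.rel.r (Sum.inl i) (Sum.inr j)) : ∃ jm, d.rel.r (Sum.inl jm) (Sum.inr j) := by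
  obtain ⟨T, hT, hjT, _⟩ := hQ.2.1 (xblock x j)
    ⟨Quotient.mk x.rel (Sum.inr j), ⟨⟨i, Quotient.sound h⟩, ⟨j, rfl⟩⟩, rfl⟩ j rfl
  exact anchor_of_T hT hjT

lemma realize_ti (hQ : QL x (downBlocks d) (propBottoms d)) {i j : Fin k}
    (hx : x.rel.r (Sum.inl i) (Sum.inr j)) :
    (Mrel d x).r (ιo (Sum.inl i)) (ιo (Sum.inr j)) := by
  obtain ⟨jm, hjm⟩ := anchor_of_prop hQ hx
  have hpt : PropTop d jm := ⟨j, hjm⟩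
  have h1 : x.rel.r (Sum.inl i) (Sum.inr (Classical.choose hpt)) :=
    x.rel.trans' hx (x.rel.symm' (choose_coherent hQ hpt hjm))
  have h2 : (Mrel d x).r (ι₁ (Sum.inl i)) (ι₁ (Sum.inr jm)) :=
    bigRel_left (theA d x) d (arel_of_topmid hpt h1)
  exact (Mrel d x).trans' h2 ((Mrel d x).symm' (reach_mid hjm))

lemma realize (hQ : QL x (downBlocks d) (propBottoms d)) {u w : Fin k ⊕ Fin k}
    (hx : x.rel.r u w) : (Mrel d x).r (ιo u) (ιo w) := by
  rcases u with i | j <;> rcases w with i' | j'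
  · exact bigRel_left (theA d x) d (arel_of_top hx)
  · exact realize_ti hQ hx
  · exact (Mrel d x).symm' (realize_ti hQ (x.rel.symm' hx))
  · rcases dichotomy hQ j with ⟨T, hT, hjT, _⟩ | ⟨qd, _, _, hS, _⟩
    · rcases dichotomy hQ j' with ⟨T', hT', hjT', _⟩ | ⟨qd', _, _, hS', _⟩
      · obtain ⟨jm, hjm⟩ := anchor_of_T hT hjT
        obtain ⟨jm', hjm'⟩ := anchor_of_T hT' hjT'
        have hpt : PropTop d jm := ⟨j, hjm⟩
        have hpt' : PropTop d jm' := ⟨j', hjm'⟩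
        have hxc : x.rel.r (Sum.inr (Classical.choose hpt)) (Sum.inr (Classical.choose hpt')) :=
          x.rel.trans' (choose_coherent hQ hpt hjm)
            (x.rel.trans' hx (x.rel.symm' (choose_coherent hQ hpt' hjm')))
        have h2 : (Mrel d x).r (ι₁ (Sum.inr jm)) (ι₁ (Sum.inr jm')) :=
          bigRel_left (theA d x) d (arel_of_midmid hpt hpt' hxc)
        exact (Mrel d x).trans' (reach_mid hjm)
          ((Mrel d x).trans' h2 ((Mrel d x).symm' (reach_mid hjm')))
      · -- xblock of j' is a d-block
        simp only [] at hS'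
        have hj'm : j' ∈ xblock x j' := rfl
        have hjm : j ∈ xblock x j' := Quotient.sound hx
        rw [hS'] at hj'm hjm
        simp only [Set.mem_setOf_eq] at hj'm hjm
        exact bigRel_right (theA d x) d (Quotient.exact (hjm.trans hj'm.symm))
    · simp only [] at hS
      have hjm : j ∈ xblock x j := rfl
      have hj'm : j' ∈ xblock x j := Quotient.sound (x.rel.symm' hx)
      rw [hS] at hjm hj'm
      simp only [Set.mem_setOf_eq] at hjm hj'm
      exact bigRel_right (theA d x) d (Quotient.exact (hjm.trans hj'm.symm))

lemma rel_eq (hQ : QL x (downBlocks d) (propBottoms d)) :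
    (comp (theA d x) d).rel = x.rel := by
  apply Setoid.ext
  intro u v
  constructor
  · intro h
    have h2 := phi_invariant hQ _ _ h
    rw [Phi_outer, Phi_outer] at h2
    exact Quotient.exact (Sum.inl_injective h2)
  · intro h
    exact realize hQ h

end Construction3
end CDiag

namespace CDiag
section Construction4
variable {r k : ℕ} {d x : CDiag r k k}
open scoped Classical

def Aset (d x : CDiag r k k) (w : Fin k ⊕ Fin k) : Set (Fin k ⊕ Fin k) :=
  {p | Phi d x (ι₁ p) = Sum.inl (Quotient.mk x.rel w)}

lemma Aset_top {w : Fin k ⊕ Fin k} {i : Fin k} (hp : Sum.inl i ∈ Aset d x w) :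
    Quotient.mk x.rel (Sum.inl i) = Quotient.mk x.rel w := by
  rw [Aset, Set.mem_setOf_eq,
    show ι₁ (Sum.inl i) = (Sum.inl i : Fin k ⊕ (Fin k ⊕ Fin k)) from rfl, Phi_inl] at hp
  exact Sum.inl_injective hp

lemma Aset_mid {w : Fin k ⊕ Fin k} {j : Fin k} (hp : Sum.inr j ∈ Aset d x w) :
    ∃ h : PropTop d j,
      Quotient.mk x.rel (Sum.inr (Classical.choose h)) = Quotient.mk x.rel w := by
  rw [Aset, Set.mem_setOf_eq,
    show ι₁ (Sum.inr j) = (Sum.inr (Sum.inl j) : Fin k ⊕ (Fin k ⊕ Fin k)) from rfl] at hp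
  by_cases h : PropTop d j
  · rw [Phi_mid_pos h] at hp
    exact ⟨h, Sum.inl_injective hp⟩
  · rw [Phi_mid_neg h] at hp
    exact absurd hp (by simp)

lemma mem_Aset_M (hQ : QL x (downBlocks d) (propBottoms d)) {w p : Fin k ⊕ Fin k}
    (hp : p ∈ Aset d x w) : (Mrel d x).r (ι₁ p) (ιo w) := by
  rcases p with i | j
  · exact realize hQ (Quotient.exact (Aset_top hp))
  · obtain ⟨h, hq⟩ := Aset_mid hp
    have h1 : (Mrel d x).r (ι₂ (Sum.inl j)) (ι₂ (Sum.inr (Classical.choose h))) :=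
      bigRel_right (theA d x) d (Classical.choose_spec h)
    exact (Mrel d x).trans' h1 (realize hQ (Quotient.exact hq))

lemma Aset_of_M (hQ : QL x (downBlocks d) (propBottoms d)) {w p : Fin k ⊕ Fin k}
    (h : (Mrel d x).r (ι₁ p) (ιo w)) : p ∈ Aset d x w := by
  have h2 := phi_invariant hQ _ _ h
  rw [Phi_outer] at h2
  exact h2

lemma arel_of_Aset {w p p' : Fin k ⊕ Fin k}
    (hp : p ∈ Aset d x w) (hp' : p' ∈ Aset d x w) : (arel d x).r p p' := by
  rcases p with i | j <;> rcases p' with i' | j'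
  · exact arel_of_top (Quotient.exact ((Aset_top hp).trans (Aset_top hp').symm))
  · obtain ⟨h, hq⟩ := Aset_mid hp'
    exact arel_of_topmid h (Quotient.exact ((Aset_top hp).trans hq.symm))
  · obtain ⟨h, hq⟩ := Aset_mid hp
    exact (arel d x).symm'
      (arel_of_topmid h (Quotient.exact ((Aset_top hp').trans hq.symm)))
  · obtain ⟨h, hq⟩ := Aset_mid hp
    obtain ⟨h', hq'⟩ := Aset_mid hp'
    exact arel_of_midmid h h' (Quotient.exact (hq.trans hq'.symm))

lemma Aset_closed_arel (hQ : QL x (downBlocks d) (propBottoms d)) {w p p' : Fin k ⊕ Fin k}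
    (hp : p ∈ Aset d x w) (h : (arel d x).r p p') : p' ∈ Aset d x w :=
  Aset_of_M hQ ((Mrel d x).trans'
    ((Mrel d x).symm' (bigRel_left (theA d x) d h)) (mem_Aset_M hQ hp))

lemma Fcol_eval {w o : Fin k ⊕ Fin k} (ho : o ∈ Aset d x w) :
    Fcol d x o = x.col (Quotient.mk x.rel w) *
      (∏ᶠ (p) (_ : lead d p ∧ (Mrel d x).r (ι₂ p) (ι₁ o)),
        d.col (Quotient.mk d.rel p))⁻¹ := by
  obtain ⟨u, hu, hq⟩ : ∃ u, ψaux d o = Sum.inl u ∧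
      Quotient.mk x.rel u = Quotient.mk x.rel w := by
    rcases o with i | j
    · exact ⟨Sum.inl i, rfl, Aset_top ho⟩
    · obtain ⟨h, hq⟩ := Aset_mid ho
      exact ⟨Sum.inr (Classical.choose h), ψaux_inr_pos h, hq⟩
  have hex : ∃ u, ψaux d o = Sum.inl u := ⟨u, hu⟩
  have hch : Classical.choose hex = u :=
    Sum.inl_injective ((Classical.choose_spec hex).symm.trans hu)
  rw [Fcol, dif_pos hex, hch, hq]

lemma col_eq (hQ : QL x (downBlocks d) (propBottoms d)) (w : Fin k ⊕ Fin k) :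
    (comp (theA d x) d).col (Quotient.mk (comp (theA d x) d).rel w) =
      x.col (Quotient.mk x.rel w) := by
  by_cases hA : ∃ p, p ∈ Aset d x w
  · obtain ⟨p₁, hp₁⟩ := hA
    obtain ⟨pstar, hpl, hpr⟩ := exists_lead (theA d x) p₁
    have hps : pstar ∈ Aset d x w := Aset_closed_arel hQ hp₁ ((arel d x).symm' hpr)
    rw [col_comp]
    have e1 : (∏ᶠ (p) (_ : lead (theA d x) p ∧
        (bigRel (theA d x) d).r (ι₁ p) (ιo w)),
        (theA d x).col (Quotient.mk (theA d x).rel p)) =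
        (theA d x).col (Quotient.mk (theA d x).rel pstar) := by
      refine finprod_cond_singleton _ fun p => ⟨?_, ?_⟩
      · rintro ⟨hl, hm⟩
        exact lead_unique hl hpl (arel_of_Aset (Aset_of_M hQ hm) hps)
      · rintro rfl
        exact ⟨hpl, mem_Aset_M hQ hps⟩
    rw [e1]
    set o := (Quotient.mk (theA d x).rel pstar).out with hodef
    have hoa : (arel d x).r o pstar := Quotient.mk_out (s := (theA d x).rel) pstar
    have ho : o ∈ Aset d x w := Aset_closed_arel hQ hps ((arel d x).symm' hoa)
    have e2 : (theA d x).col (Quotient.mk (theA d x).rel pstar) = Fcol d x o := rfl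
    rw [e2, Fcol_eval ho]
    have hMo : (Mrel d x).r (ι₁ o) (ιo w) := mem_Aset_M hQ ho
    have e3 : (∏ᶠ (p) (_ : lead d p ∧ (Mrel d x).r (ι₂ p) (ι₁ o)),
        d.col (Quotient.mk d.rel p)) =
        (∏ᶠ (p) (_ : lead d p ∧ (bigRel (theA d x) d).r (ι₂ p) (ιo w)),
        d.col (Quotient.mk d.rel p)) := by
      refine finprod_cond_congr _ fun p => and_congr_right fun _ => ?_
      exact ⟨fun h => (Mrel d x).trans' h hMo,
        fun h => (Mrel d x).trans' h ((Mrel d x).symm' hMo)⟩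
    rw [e3, inv_mul_cancel_right]
  · push_neg at hA
    rcases w with i | j₀
    · refine absurd ?_ (hA (Sum.inl i))
      show Phi d x (ι₁ (Sum.inl i)) = Sum.inl (Quotient.mk x.rel (Sum.inl i))
      rfl
    · rcases dichotomy hQ j₀ with ⟨T, hT, hjT, _⟩ | ⟨qd, htop, _, hS, hc⟩
      · obtain ⟨jm, hjm⟩ := anchor_of_T hT hjT
        have hpt : PropTop d jm := ⟨j₀, hjm⟩
        refine absurd ?_ (hA (Sum.inr jm))
        show Phi d x (ι₁ (Sum.inr jm)) = Sum.inl (Quotient.mk x.rel (Sum.inr j₀))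
        rw [show ι₁ (Sum.inr jm) = (Sum.inr (Sum.inl jm) : Fin k ⊕ (Fin k ⊕ Fin k)) from rfl,
          Phi_mid_pos hpt]
        exact congrArg Sum.inl (Quotient.sound (choose_coherent hQ hpt hjm))
      · simp only [] at hS hc
        have hj₀ : j₀ ∈ xblock x j₀ := rfl
        rw [hS] at hj₀
        simp only [Set.mem_setOf_eq] at hj₀
        have hK : ∀ i : Fin k, ¬ d.rel.r (Sum.inl i) (Sum.inr j₀) := fun i h =>
          htop i (hj₀ ▸ Quotient.sound h)
        rw [comp_nonprop_col (theA d x) d j₀ hK, hj₀, ← hc]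

lemma L_backward (d x : CDiag r k k) (hQ : QL x (downBlocks d) (propBottoms d)) :
    ∃ a : CDiag r k k, comp a d = x :=
  ⟨theA d x, ext_col (rel_eq hQ) (col_eq hQ)⟩

end Construction4
end CDiag

namespace CDiag
section Assemble
variable {r k : ℕ}

lemma QL_self (d : CDiag r k k) : QL d (downBlocks d) (propBottoms d) := by
  refine ⟨Set.Subset.refl _, ?_, fun p hp => Or.inl hp⟩
  intro S hS j hj
  exact ⟨S, hS, hj, Set.Subset.refl _⟩

lemma propBottoms_overlap {x : CDiag r k k} {S₁ S₂ : Set (Fin k)}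
    (h₁ : S₁ ∈ propBottoms x) (h₂ : S₂ ∈ propBottoms x) {j : Fin k}
    (hj₁ : j ∈ S₁) (hj₂ : j ∈ S₂) : S₁ = S₂ := by
  obtain ⟨q₁, _, rfl⟩ := h₁
  obtain ⟨q₂, _, rfl⟩ := h₂
  simp only [Set.mem_setOf_eq] at hj₁ hj₂
  rw [← hj₁, ← hj₂]

lemma PB_incl (d d' : CDiag r k k)
    (h1 : QL d (downBlocks d') (propBottoms d'))
    (h2 : QL d' (downBlocks d) (propBottoms d)) :
    propBottoms d ⊆ propBottoms d' := by
  rintro T hT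
  obtain ⟨q, hprop, rfl⟩ := hT
  obtain ⟨j, hj⟩ := hprop.2
  have hjT : j ∈ {j₂ : Fin k | Quotient.mk d.rel (Sum.inr j₂) = q} := hj
  obtain ⟨T', hT', hjT', hsub'⟩ := h1.2.1 _ ⟨q, hprop, rfl⟩ j hjT
  obtain ⟨T'', hT'', hjT'', hsub''⟩ := h2.2.1 T' hT' j hjT'
  have e1 : T'' = {j₂ : Fin k | Quotient.mk d.rel (Sum.inr j₂) = q} :=
    propBottoms_overlap hT'' ⟨q, hprop, rfl⟩ hjT'' hjT
  have e2 : T' = {j₂ : Fin k | Quotient.mk d.rel (Sum.inr j₂) = q} :=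
    Set.Subset.antisymm hsub' (e1 ▸ hsub'')
  rw [← e2]
  exact hT'

end Assemble
end CDiag



/-- Green's L-relation on the colored partition monoid `CPar_k`:
`CPar_k·d = CPar_k·d'` if and only if `d` and `d'` have the same colored
nonpropagating bottom blocks and the same set of bottom constituents of
propagating parts. -/
theorem coloredPartitionMonoid_L_iff (r k : ℕ) (d d' : CDiag r k k) :
    {x : CDiag r k k | ∃ a, comp a d = x}
      = {x : CDiag r k k | ∃ a, comp a d' = x}
    ↔ (downBlocks d = downBlocks d' ∧ propBottoms d = propBottoms d') := by
  constructor
  · intro h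
    have hd'mem : d' ∈ {x : CDiag r k k | ∃ a, comp a d' = x} :=
      L_backward d' d' (QL_self d')
    have hdmem : d ∈ {x : CDiag r k k | ∃ a, comp a d = x} :=
      L_backward d d (QL_self d)
    rw [← h] at hd'mem
    rw [h] at hdmem
    obtain ⟨a, ha⟩ := hd'mem
    obtain ⟨b, hb⟩ := hdmem
    have h2 : QL d' (downBlocks d) (propBottoms d) := ha ▸ L_forward a d
    have h1 : QL d (downBlocks d') (propBottoms d') := hb ▸ L_forward b d'
    exact ⟨Set.Subset.antisymm h2.1 h1.1,
      Set.Subset.antisymm (PB_incl d d' h1 h2) (PB_incl d' d h2 h1)⟩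
  · rintro ⟨hDB, hPB⟩
    ext y
    simp only [Set.mem_setOf_eq]
    constructor
    · rintro ⟨a, rfl⟩
      refine L_backward d' _ ?_
      rw [← hDB, ← hPB]
      exact L_forward a d
    · rintro ⟨a, rfl⟩
      refine L_backward d _ ?_
      rw [hDB, hPB]
      exact L_forward a d'
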